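/- arXiv:1912.13160 — 2 statements merged into one kernel-verified Lean document; each statement's English description precedes it below -/
import Mathlib

section
/- Let (L, U, η, ε) be a comonoidal adjunction between monoidal categories C and D (i.e., L : C → D and U : D → C are comonoidal functors and the unit η and counit ε are comonoidal natural transformations), and let V be another monoidal category. Then for any comonoidal functors F : C → V and G : D → V, the category W_ℓ(F∘U, G) of objects M of V equipped with natural transformations M ⊗ F(U(-)) → G(-) ⊗ M compatible with the comonoidal structures is isomorphic to the category W_ℓ(F, G∘L). -/
/-!
Statement 0: For a comonoidal adjunction `(L ⊣ U, η, ε)` between monoidal categories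
`C` and `D`, and comonoidal (= oplax monoidal) functors `F : C ⥤ V`, `G : D ⥤ V`,
the categories `W_ℓ(F ∘ U, G)` and `W_ℓ(F, G ∘ L)` are isomorphic.
-/

namespace Stmt0

open CategoryTheory MonoidalCategory CategoryTheory.Functor
open CategoryTheory.Functor.OplaxMonoidal

universe v₁ v₂ v₃ u₁ u₂ u₃

variable {B : Type u₁} [Category.{v₁} B] [MonoidalCategory B]
variable {V : Type u₂} [Category.{v₂} V] [MonoidalCategory V]

/-- An object of the category `W_ℓ(F, G)` for comonoidal functors `F, G : B ⥤ V`: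
an object `M` of `V` together with a natural family
`ρ X : M ⊗ F X ⟶ G X ⊗ M` compatible with the comonoidal structures. -/
structure WLeftObj (F G : B ⥤ V) [F.OplaxMonoidal] [G.OplaxMonoidal] where
  M : V
  ρ : ∀ X : B, M ⊗ F.obj X ⟶ G.obj X ⊗ M
  naturality : ∀ {X Y : B} (f : X ⟶ Y),
    (M ◁ F.map f) ≫ ρ Y = ρ X ≫ (G.map f ▷ M)
  compat_tensor : ∀ X Y : B,
    ρ (X ⊗ Y) ≫ (δ G X Y ▷ M) =
      (M ◁ δ F X Y) ≫ (α_ M (F.obj X) (F.obj Y)).inv ≫ (ρ X ▷ F.obj Y) ≫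
        (α_ (G.obj X) M (F.obj Y)).hom ≫ (G.obj X ◁ ρ Y) ≫
        (α_ (G.obj X) (G.obj Y) M).inv
  compat_unit :
    ρ (𝟙_ B) ≫ (η G ▷ M) ≫ (λ_ M).hom = (M ◁ η F) ≫ (ρ_ M).hom

/-- A morphism in `W_ℓ(F, G)`. -/
@[ext]
structure WLeftHom {F G : B ⥤ V} [F.OplaxMonoidal] [G.OplaxMonoidal]
    (P Q : WLeftObj F G) where
  f : P.M ⟶ Q.M
  comm : ∀ X : B, (f ▷ F.obj X) ≫ Q.ρ X = P.ρ X ≫ (G.obj X ◁ f)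

instance wleftCategory (F G : B ⥤ V) [F.OplaxMonoidal] [G.OplaxMonoidal] :
    Category (WLeftObj F G) where
  Hom P Q := WLeftHom P Q
  id P := ⟨𝟙 P.M, by intro X; simp⟩
  comp {P Q R} u v := ⟨u.f ≫ v.f, by
    intro X
    simp only [comp_whiskerRight, MonoidalCategory.whiskerLeft_comp, Category.assoc]
    rw [v.comm X, reassoc_of% (u.comm X)]⟩
  id_comp u := by apply WLeftHom.ext; simp
  comp_id u := by apply WLeftHom.ext; simp
  assoc u v w := by apply WLeftHom.ext; simp

/-- A natural transformation between comonoidal functors is comonoidal if it is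
compatible with the comonoidal structure maps. -/
def IsComonoidalNT {C D : Type*} [Category C] [Category D]
    [MonoidalCategory C] [MonoidalCategory D]
    {F G : C ⥤ D} [F.OplaxMonoidal] [G.OplaxMonoidal] (τ : F ⟶ G) : Prop :=
  (∀ X Y : C, τ.app (X ⊗ Y) ≫ δ G X Y = δ F X Y ≫ (τ.app X ⊗ₘ τ.app Y)) ∧
  (τ.app (𝟙_ C) ≫ OplaxMonoidal.η G = OplaxMonoidal.η F)

variable {C : Type u₃} [Category.{v₃} C] [MonoidalCategory C]
variable {D : Type u₁} [Category.{v₁} D] [MonoidalCategory D]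


section Helpers

@[simp] lemma comp_f {F G : B ⥤ V} [F.OplaxMonoidal] [G.OplaxMonoidal]
    {P Q R : WLeftObj F G} (u : P ⟶ Q) (v : Q ⟶ R) :
    (u ≫ v).f = u.f ≫ v.f := rfl

lemma eqToHom_f {F G : B ⥤ V} [F.OplaxMonoidal] [G.OplaxMonoidal]
    {P Q : WLeftObj F G} (h : P = Q) :
    (eqToHom h).f = eqToHom (congrArg WLeftObj.M h) := by subst h; rfl

lemma eqToHom_self {a : V} (p : a = a) : eqToHom p = 𝟙 a := rfl

lemma obj_eq {F G : B ⥤ V} [F.OplaxMonoidal] [G.OplaxMonoidal]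
    {P Q : WLeftObj F G} (hM : P.M = Q.M)
    (hρ : ∀ X, P.ρ X =
      eqToHom (by rw [hM]) ≫ Q.ρ X ≫ eqToHom (by rw [hM])) : P = Q := by
  obtain ⟨M₁, ρ₁, n₁, t₁, u₁⟩ := P
  obtain ⟨M₂, ρ₂, n₂, t₂, u₂⟩ := Q
  dsimp at hM
  subst hM
  simp only [eqToHom_self, Category.id_comp, Category.comp_id] at hρ
  obtain rfl : ρ₁ = ρ₂ := funext hρ
  rfl

lemma juggle {M m m' n n' p q : V} (f : m ⟶ m') (g : n ⟶ n')
    (ρX : M ⊗ m' ⟶ p ⊗ M) (ρY : M ⊗ n' ⟶ q ⊗ M) :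
    (M ◁ (f ⊗ₘ g)) ≫ (α_ M m' n').inv ≫ (ρX ▷ n') ≫ (α_ p M n').hom ≫ (p ◁ ρY) =
      (α_ M m n).inv ≫ ((M ◁ f ≫ ρX) ▷ n) ≫ (α_ p M n).hom ≫ (p ◁ (M ◁ g ≫ ρY)) := by
  rw [MonoidalCategory.tensorHom_def]
  simp only [MonoidalCategory.whiskerLeft_comp, Category.assoc,
    associator_inv_naturality_middle_assoc, associator_inv_naturality_right_assoc,
    comp_whiskerRight, MonoidalCategory.whiskerLeft_comp]
  rw [whisker_exchange_assoc]
  simp [associator_naturality_right]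

lemma juggle' {N m n p p' q q' : V} (σX : N ⊗ m ⟶ p ⊗ N) (σY : N ⊗ n ⟶ q ⊗ N)
    (f : p ⟶ p') (g : q ⟶ q') :
    (α_ N m n).inv ≫ (σX ▷ n) ≫ (α_ p N n).hom ≫ (p ◁ σY) ≫ (α_ p q N).inv ≫
        ((f ⊗ₘ g) ▷ N) =
      (α_ N m n).inv ≫ ((σX ≫ (f ▷ N)) ▷ n) ≫ (α_ p' N n).hom ≫
        (p' ◁ (σY ≫ (g ▷ N))) ≫ (α_ p' q' N).inv := by
  rw [MonoidalCategory.tensorHom_def]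
  simp only [comp_whiskerRight, Category.assoc, MonoidalCategory.whiskerLeft_comp]
  rw [← associator_inv_naturality_left_assoc, whisker_exchange_assoc,
    ← associator_naturality_left_assoc, ← associator_inv_naturality_middle]

end Helpers

section Adj

variable {C : Type u₃} [Category.{v₃} C] [MonoidalCategory C]
variable {D : Type u₁} [Category.{v₁} D] [MonoidalCategory D]
variable (L : C ⥤ D) (U : D ⥤ C) [L.OplaxMonoidal] [U.OplaxMonoidal]
  (adj : L ⊣ U)
  (F : C ⥤ V) (G : D ⥤ V) [F.OplaxMonoidal] [G.OplaxMonoidal]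

/-- The forward functor. -/
def phi (hunit : IsComonoidalNT (F := 𝟭 C) (G := L ⋙ U) adj.unit) :
    WLeftObj (U ⋙ F) G ⥤ WLeftObj F (L ⋙ G) where
  obj P :=
  { M := P.M
    ρ := fun X => (P.M ◁ F.map (adj.unit.app X)) ≫ P.ρ (L.obj X)
    naturality := by
      intro X Y f
      have h := P.naturality (L.map f)
      dsimp at h ⊢
      rw [← MonoidalCategory.whiskerLeft_comp_assoc, ← F.map_comp]
      have hn : f ≫ adj.unit.app Y = adj.unit.app X ≫ U.map (L.map f) := by
        simpa using adj.unit.naturality f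
      rw [hn, F.map_comp, MonoidalCategory.whiskerLeft_comp_assoc, h, Category.assoc]
    compat_tensor := by
      intro X Y
      have hnat := P.naturality (δ L X Y)
      have hct := P.compat_tensor (L.obj X) (L.obj Y)
      have hu := hunit.1 X Y
      simp only [Functor.comp_obj, Functor.comp_map, Functor.id_obj, Functor.id_map,
        OplaxMonoidal.comp_δ, OplaxMonoidal.id_δ, Category.id_comp, Category.assoc,
        comp_whiskerRight, MonoidalCategory.whiskerLeft_comp] at hnat hct hu ⊢
      have hF : F.map (adj.unit.app (X ⊗ Y)) ≫ F.map (U.map (δ L X Y)) ≫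
          F.map (δ U (L.obj X) (L.obj Y)) ≫ δ F (U.obj (L.obj X)) (U.obj (L.obj Y)) =
          δ F X Y ≫ (F.map (adj.unit.app X) ⊗ₘ F.map (adj.unit.app Y)) := by
        rw [← Functor.map_comp_assoc, ← Functor.map_comp_assoc]
        simp only [Category.assoc]
        rw [hu, ← OplaxMonoidal.δ_natural]
      rw [← reassoc_of% hnat, hct]
      simp only [← MonoidalCategory.whiskerLeft_comp_assoc, Category.assoc]
      rw [hF]
      simp only [MonoidalCategory.whiskerLeft_comp, Category.assoc]
      rw [reassoc_of% (juggle (F.map (adj.unit.app X)) (F.map (adj.unit.app Y))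
        (P.ρ (L.obj X)) (P.ρ (L.obj Y)))]
      simp
    compat_unit := by
      have hnat := P.naturality (OplaxMonoidal.η L)
      have hcu := P.compat_unit
      have hu := hunit.2
      simp only [Functor.comp_obj, Functor.comp_map, Functor.id_obj,
        OplaxMonoidal.comp_η, OplaxMonoidal.id_η, Category.assoc,
        comp_whiskerRight, MonoidalCategory.whiskerLeft_comp] at hnat hcu hu ⊢
      rw [← reassoc_of% hnat, hcu]
      simp only [← MonoidalCategory.whiskerLeft_comp_assoc, Category.assoc]
      rw [← Functor.map_comp_assoc, ← Functor.map_comp_assoc, Category.assoc, hu]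
      simp }
  map u :=
  { f := u.f
    comm := by
      intro X
      have h := u.comm (L.obj X)
      dsimp at h ⊢
      rw [← whisker_exchange_assoc, h, Category.assoc] }
  map_id P := by apply WLeftHom.ext; rfl
  map_comp u v := by apply WLeftHom.ext; rfl

/-- The backward functor. -/
def psi (hcounit : IsComonoidalNT (F := U ⋙ L) (G := 𝟭 D) adj.counit) :
    WLeftObj F (L ⋙ G) ⥤ WLeftObj (U ⋙ F) G where
  obj Q :=
  { M := Q.M
    ρ := fun X => Q.ρ (U.obj X) ≫ (G.map (adj.counit.app X) ▷ Q.M)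
    naturality := by
      intro X Y f
      have h := Q.naturality (U.map f)
      dsimp at h ⊢
      rw [reassoc_of% h, ← comp_whiskerRight, ← G.map_comp]
      have hn : L.map (U.map f) ≫ adj.counit.app Y = adj.counit.app X ≫ f := by
        simpa using adj.counit.naturality f
      rw [hn, G.map_comp, comp_whiskerRight, Category.assoc]
    compat_tensor := by
      intro X Y
      have hnat := Q.naturality (δ U X Y)
      have hct := Q.compat_tensor (U.obj X) (U.obj Y)
      have hc := hcounit.1 X Y
      simp only [Functor.comp_obj, Functor.comp_map, Functor.id_obj, Functor.id_map,
        OplaxMonoidal.comp_δ, OplaxMonoidal.id_δ, Category.comp_id, Category.assoc,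
        comp_whiskerRight, MonoidalCategory.whiskerLeft_comp] at hnat hct hc ⊢
      have hG : G.map (adj.counit.app (X ⊗ Y)) ≫ δ G X Y =
          G.map (L.map (δ U X Y)) ≫ G.map (δ L (U.obj X) (U.obj Y)) ≫
            δ G (L.obj (U.obj X)) (L.obj (U.obj Y)) ≫
            (G.map (adj.counit.app X) ⊗ₘ G.map (adj.counit.app Y)) := by
        rw [hc]
        simp only [Functor.map_comp, Category.assoc]
        rw [← OplaxMonoidal.δ_natural]
      conv_lhs => rw [← comp_whiskerRight, hG]
      simp only [comp_whiskerRight, Category.assoc]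
      rw [← reassoc_of% hnat, reassoc_of% hct,
        juggle' (p := G.obj (L.obj (U.obj X))) (q := G.obj (L.obj (U.obj Y)))
          (Q.ρ (U.obj X)) (Q.ρ (U.obj Y))
          (G.map (adj.counit.app X)) (G.map (adj.counit.app Y))]
      simp
    compat_unit := by
      have hnat := Q.naturality (OplaxMonoidal.η U)
      have hcu := Q.compat_unit
      have hc := hcounit.2
      simp only [Functor.comp_obj, Functor.comp_map, Functor.id_obj,
        OplaxMonoidal.comp_η, OplaxMonoidal.id_η, Category.comp_id, Category.assoc,
        comp_whiskerRight, MonoidalCategory.whiskerLeft_comp] at hnat hcu hc ⊢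
      rw [hc]
      simp only [Functor.map_comp, comp_whiskerRight, Category.assoc]
      rw [← reassoc_of% hnat, hcu] }
  map u :=
  { f := u.f
    comm := by
      intro X
      dsimp
      rw [reassoc_of% u.comm (U.obj X), whisker_exchange, Category.assoc] }
  map_id Q := by apply WLeftHom.ext; rfl
  map_comp u v := by apply WLeftHom.ext; rfl

end Adj

/-- Let `(L, U, η, ε) : C → D` be a comonoidal adjunction, and let
`F : C ⥤ V` and `G : D ⥤ V` be comonoidal functors.  Then there is an isomorphism of
categories `W_ℓ(F ∘ U, G) ≅ W_ℓ(F, G ∘ L)`. -/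
theorem wleft_iso_of_comonoidal_adjunction
    (L : C ⥤ D) (U : D ⥤ C) [L.OplaxMonoidal] [U.OplaxMonoidal]
    (adj : L ⊣ U)
    (hunit : IsComonoidalNT (F := 𝟭 C) (G := L ⋙ U) adj.unit)
    (hcounit : IsComonoidalNT (F := U ⋙ L) (G := 𝟭 D) adj.counit)
    (F : C ⥤ V) (G : D ⥤ V) [F.OplaxMonoidal] [G.OplaxMonoidal] :
    ∃ (Φ : WLeftObj (U ⋙ F) G ⥤ WLeftObj F (L ⋙ G))
      (Ψ : WLeftObj F (L ⋙ G) ⥤ WLeftObj (U ⋙ F) G),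
      Φ ⋙ Ψ = 𝟭 _ ∧ Ψ ⋙ Φ = 𝟭 _ := by
  refine ⟨phi L U adj F G hunit, psi L U adj F G hcounit, ?_, ?_⟩
  · refine CategoryTheory.Functor.ext (fun P => ?_) (h_map := fun P Q u => ?_)
    · refine obj_eq rfl ?_
      intro X
      dsimp only [phi, psi, Functor.comp_obj]
      change _ = 𝟙 _ ≫ _ ≫ 𝟙 _
      simp only [Category.id_comp, Category.comp_id]
      have h := P.naturality (adj.counit.app X)
      dsimp at h ⊢
      rw [Category.assoc, ← h, ← MonoidalCategory.whiskerLeft_comp_assoc, ← F.map_comp,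
        adj.right_triangle_components, F.map_id, MonoidalCategory.whiskerLeft_id,
        Category.id_comp]
    · apply WLeftHom.ext
      rw [comp_f, comp_f, eqToHom_f, eqToHom_f]
      show u.f = 𝟙 _ ≫ u.f ≫ 𝟙 _
      simp
  · refine CategoryTheory.Functor.ext (fun Q => ?_) (h_map := fun P Q u => ?_)
    · refine obj_eq rfl ?_
      intro X
      dsimp only [phi, psi, Functor.comp_obj]
      change _ = 𝟙 _ ≫ _ ≫ 𝟙 _
      simp only [Category.id_comp, Category.comp_id]
      have h := Q.naturality (adj.unit.app X)
      dsimp at h ⊢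
      rw [reassoc_of% h, ← comp_whiskerRight, ← G.map_comp,
        adj.left_triangle_components, G.map_id, MonoidalCategory.id_whiskerRight,
        Category.comp_id]
    · apply WLeftHom.ext
      rw [comp_f, comp_f, eqToHom_f, eqToHom_f]
      show u.f = 𝟙 _ ≫ u.f ≫ 𝟙 _
      simp

end Stmt0
end

section
/- Let (D, ω) be a construction data over a monoidal category V with cocontinuous tensor product and suppose V is complete. Then the bimonad T(M) = ∫^{x∈D} ω(x) ⊗ M ⊗ ω(x)^∨ admits a right adjoint, given by the end T^♮(M) = ∫_{x∈D} ω(x)^∨ ⊗ M ⊗ ω(x). -/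
namespace CData

open CategoryTheory MonoidalCategory CategoryTheory.Functor

universe v₁ v₂ u₁ u₂

variable {D : Type u₁} [Category.{v₁} D] [MonoidalCategory D]
variable {V : Type u₂} [Category.{v₂} V] [MonoidalCategory V]

/-- A construction data over `V`: a (essentially small) monoidal category `D`, a strong
monoidal functor `ω : D ⥤ V` such that every `ω x` has a right dual `dual x` (in the
convention `ev : ω x ⊗ (ω x)^∨ ⟶ 𝟙`, `coev : 𝟙 ⟶ (ω x)^∨ ⊗ ω x`), together with a choice
of the coends `T M = ∫^{x} ω x ⊗ M ⊗ (ω x)^∨`, packaged via their universal property.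
It also records the transpose `dmap` of morphisms and the comparison maps `d0`, `d2`
expressing the monoidality of the right duality functor. -/
structure ConstructionData (ω : D ⥤ V) [ω.Monoidal] where
  dual : D → V
  ev : ∀ x : D, ω.obj x ⊗ dual x ⟶ 𝟙_ V
  coev : ∀ x : D, 𝟙_ V ⟶ dual x ⊗ ω.obj x
  zig : ∀ x : D,
    (ρ_ (ω.obj x)).inv ≫ (ω.obj x ◁ coev x) ≫ (α_ (ω.obj x) (dual x) (ω.obj x)).inv ≫
      (ev x ▷ ω.obj x) ≫ (λ_ (ω.obj x)).hom = 𝟙 (ω.obj x)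
  zag : ∀ x : D,
    (λ_ (dual x)).inv ≫ (coev x ▷ dual x) ≫ (α_ (dual x) (ω.obj x) (dual x)).hom ≫
      (dual x ◁ ev x) ≫ (ρ_ (dual x)).hom = 𝟙 (dual x)
  /-- the transpose `ω(f)^∨ : dual y ⟶ dual x` of `ω f` -/
  dmap : ∀ {x y : D}, (x ⟶ y) → (dual y ⟶ dual x)
  dmap_spec : ∀ {x y : D} (f : x ⟶ y),
    dmap f = (λ_ (dual y)).inv ≫ (coev x ▷ dual y) ≫
      (α_ (dual x) (ω.obj x) (dual y)).hom ≫ (dual x ◁ (ω.map f ▷ dual y)) ≫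
      (dual x ◁ ev y) ≫ (ρ_ (dual x)).hom
  /-- the comparison `ϑ₀`-type map `𝟙 ⟶ (ω 𝟙)^∨`, i.e. `ω̌₀` -/
  d0 : 𝟙_ V ⟶ dual (𝟙_ D)
  d0_spec : (LaxMonoidal.ε ω ⊗ₘ d0) ≫ ev (𝟙_ D) = (λ_ (𝟙_ V)).hom
  /-- the comparison map `ω̌² : (ω y)^∨ ⊗ (ω x)^∨ ⟶ (ω (x ⊗ y))^∨` -/
  d2 : ∀ x y : D, dual y ⊗ dual x ⟶ dual (x ⊗ y)
  d2_spec : ∀ x y : D,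
    (LaxMonoidal.μ ω x y ▷ (dual y ⊗ dual x)) ≫ (ω.obj (x ⊗ y) ◁ d2 x y) ≫ ev (x ⊗ y) =
      (α_ (ω.obj x) (ω.obj y) (dual y ⊗ dual x)).hom ≫
        (ω.obj x ◁ (α_ (ω.obj y) (dual y) (dual x)).inv) ≫
        (ω.obj x ◁ (ev y ▷ dual x)) ≫ (ω.obj x ◁ (λ_ (dual x)).hom) ≫ ev x
  /-- the coend `T M = ∫^{x ∈ D} ω x ⊗ M ⊗ (ω x)^∨` -/
  T : V ⥤ V
  /-- the universal dinatural transformation -/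
  i : ∀ (x : D) (M : V), (ω.obj x ⊗ M) ⊗ dual x ⟶ T.obj M
  dinat : ∀ {x y : D} (f : x ⟶ y) (M : V),
    ((ω.map f ▷ M) ▷ dual y) ≫ i y M = ((ω.obj x ⊗ M) ◁ dmap f) ≫ i x M
  nat : ∀ (x : D) {M N : V} (g : M ⟶ N),
    ((ω.obj x ◁ g) ▷ dual x) ≫ i x N = i x M ≫ T.map g
  universal : ∀ (M N : V) (f : ∀ x : D, (ω.obj x ⊗ M) ⊗ dual x ⟶ N),
    (∀ {x y : D} (h : x ⟶ y),
      ((ω.map h ▷ M) ▷ dual y) ≫ f y = ((ω.obj x ⊗ M) ◁ dmap h) ≫ f x) →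
    ∃! g : T.obj M ⟶ N, ∀ x : D, i x M ≫ g = f x

variable {ω : D ⥤ V} [ω.Monoidal]

/-- The axioms of a bimonad, for an endofunctor with structure morphisms given as
plain families. -/
structure IsBimonadFam (T : V ⥤ V)
    (μT : ∀ M : V, T.obj (T.obj M) ⟶ T.obj M)
    (ηT : ∀ M : V, M ⟶ T.obj M)
    (δT : ∀ M N : V, T.obj (M ⊗ N) ⟶ T.obj M ⊗ T.obj N)
    (εT : T.obj (𝟙_ V) ⟶ 𝟙_ V) : Prop where
  μ_natural : ∀ {M N : V} (f : M ⟶ N), T.map (T.map f) ≫ μT N = μT M ≫ T.map f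
  η_natural : ∀ {M N : V} (f : M ⟶ N), f ≫ ηT N = ηT M ≫ T.map f
  δ_natural : ∀ {M M' N N' : V} (f : M ⟶ M') (g : N ⟶ N'),
    T.map (f ⊗ₘ g) ≫ δT M' N' = δT M N ≫ (T.map f ⊗ₘ T.map g)
  mul_assoc : ∀ M : V, T.map (μT M) ≫ μT M = μT (T.obj M) ≫ μT M
  mul_unit_left : ∀ M : V, ηT (T.obj M) ≫ μT M = 𝟙 (T.obj M)
  mul_unit_right : ∀ M : V, T.map (ηT M) ≫ μT M = 𝟙 (T.obj M)
  comul_coassoc : ∀ M N P : V,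
    δT (M ⊗ N) P ≫ (δT M N ▷ T.obj P) ≫ (α_ (T.obj M) (T.obj N) (T.obj P)).hom =
      T.map (α_ M N P).hom ≫ δT M (N ⊗ P) ≫ (T.obj M ◁ δT N P)
  comul_counit_left : ∀ M : V,
    δT (𝟙_ V) M ≫ (εT ▷ T.obj M) ≫ (λ_ (T.obj M)).hom = T.map (λ_ M).hom
  comul_counit_right : ∀ M : V,
    δT M (𝟙_ V) ≫ (T.obj M ◁ εT) ≫ (ρ_ (T.obj M)).hom = T.map (ρ_ M).hom
  μ_comonoidal : ∀ M N : V,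
    μT (M ⊗ N) ≫ δT M N =
      T.map (δT M N) ≫ δT (T.obj M) (T.obj N) ≫ (μT M ⊗ₘ μT N)
  μ_counit : μT (𝟙_ V) ≫ εT = T.map εT ≫ εT
  η_comonoidal : ∀ M N : V, ηT (M ⊗ N) ≫ δT M N = ηT M ⊗ₘ ηT N
  η_counit : ηT (𝟙_ V) ≫ εT = 𝟙 (𝟙_ V)

variable (cd : ConstructionData ω)

/-- The defining equation of the multiplication `μ` of the bimonad `T`
(on the universal dinatural transformations). -/
def MuEq (μT : ∀ M : V, cd.T.obj (cd.T.obj M) ⟶ cd.T.obj M) : Prop :=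
  ∀ (x y : D) (M : V),
    ((ω.obj x ◁ cd.i y M) ▷ cd.dual x) ≫ cd.i x (cd.T.obj M) ≫ μT M =
      (𝟙 ((ω.obj x ⊗ ((ω.obj y ⊗ M) ⊗ cd.dual y)) ⊗ cd.dual x) ⊗≫
        ((LaxMonoidal.μ ω x y ▷ M) ▷ (cd.dual y ⊗ cd.dual x))) ≫
        ((ω.obj (x ⊗ y) ⊗ M) ◁ cd.d2 x y) ≫ cd.i (x ⊗ y) M

/-- The defining equation of the unit `η` of the bimonad `T`. -/
def EtaEq (ηT : ∀ M : V, M ⟶ cd.T.obj M) : Prop :=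
  ∀ M : V,
    ηT M = (λ_ M).inv ≫ (LaxMonoidal.ε ω ▷ M) ≫ (ρ_ (ω.obj (𝟙_ D) ⊗ M)).inv ≫
      ((ω.obj (𝟙_ D) ⊗ M) ◁ cd.d0) ≫ cd.i (𝟙_ D) M

/-- The defining equation of the comultiplication `δ` of the bimonad `T`. -/
def DeltaEq (δT : ∀ M N : V, cd.T.obj (M ⊗ N) ⟶ cd.T.obj M ⊗ cd.T.obj N) : Prop :=
  ∀ (x : D) (M N : V),
    cd.i x (M ⊗ N) ≫ δT M N =
      (𝟙 ((ω.obj x ⊗ (M ⊗ N)) ⊗ cd.dual x) ⊗≫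
        ((ω.obj x ⊗ M) ◁ (cd.coev x ▷ (N ⊗ cd.dual x))) ⊗≫
        (cd.i x M ⊗ₘ cd.i x N))

/-- The defining equation of the counit `ε` of the bimonad `T`. -/
def EpsEq (εT : cd.T.obj (𝟙_ V) ⟶ 𝟙_ V) : Prop :=
  ∀ x : D, cd.i x (𝟙_ V) ≫ εT = ((ρ_ (ω.obj x)).hom ▷ cd.dual x) ≫ cd.ev x


variable (ω) in
/-- A construction data together with the structure morphisms of the associated bimonad
`T` (defined by the equations of Theorem 3.2) and the bimonad axioms. -/
structure FRTData where
  cd : ConstructionData ω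
  μT : ∀ M : V, cd.T.obj (cd.T.obj M) ⟶ cd.T.obj M
  ηT : ∀ M : V, M ⟶ cd.T.obj M
  δT : ∀ M N : V, cd.T.obj (M ⊗ N) ⟶ cd.T.obj M ⊗ cd.T.obj N
  εT : cd.T.obj (𝟙_ V) ⟶ 𝟙_ V
  hμ : MuEq cd μT
  hη : EtaEq cd ηT
  hδ : DeltaEq cd δT
  hε : EpsEq cd εT
  bimonad : IsBimonadFam cd.T μT ηT δT εT

variable (cd : ConstructionData ω)

/-- The end `T^♮ M = ∫_{x ∈ D} (ω x)^∨ ⊗ M ⊗ ω x`, packaged via its universal property. -/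
structure EndData where
  G : V ⥤ V
  j : ∀ (x : D) (M : V), G.obj M ⟶ (cd.dual x ⊗ M) ⊗ ω.obj x
  dinat : ∀ {x y : D} (f : x ⟶ y) (M : V),
    j x M ≫ ((cd.dual x ⊗ M) ◁ ω.map f) = j y M ≫ ((cd.dmap f ▷ M) ▷ ω.obj y)
  nat : ∀ (x : D) {M N : V} (g : M ⟶ N),
    G.map g ≫ j x N = j x M ≫ ((cd.dual x ◁ g) ▷ ω.obj x)
  universal : ∀ (M N : V) (f : ∀ x : D, N ⟶ (cd.dual x ⊗ M) ⊗ ω.obj x),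
    (∀ {x y : D} (h : x ⟶ y),
      f x ≫ ((cd.dual x ⊗ M) ◁ ω.map h) = f y ≫ ((cd.dmap h ▷ M) ▷ ω.obj y)) →
    ∃! g : N ⟶ G.obj M, ∀ x : D, g ≫ j x M = f x


section Aux
set_option linter.unusedSectionVars false
set_option maxHeartbeats 1000000


def ConstructionData.pairing (x : D) : ExactPairing (cd.dual x) (ω.obj x) where
  coevaluation' := cd.coev x
  evaluation' := cd.ev x
  coevaluation_evaluation' := by
    rw [← cancel_epi (ρ_ (ω.obj x)).inv, ← cancel_mono (λ_ (ω.obj x)).hom]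
    simpa using cd.zig x
  evaluation_coevaluation' := by
    rw [← cancel_epi (λ_ (cd.dual x)).inv, ← cancel_mono (ρ_ (cd.dual x)).hom]
    simpa using cd.zag x

def ConstructionData.hld (x : D) : HasLeftDual (ω.obj x) :=
  letI := cd.pairing x
  ⟨cd.dual x⟩

lemma ConstructionData.dmap_eq {x y : D} (f : x ⟶ y) :
    letI := cd.hld x; letI := cd.hld y
    cd.dmap f = ᘁ(ω.map f) := by
  letI := cd.hld x; letI := cd.hld y
  rw [cd.dmap_spec]
  dsimp only [leftAdjointMate]
  show _ = _ ≫ (cd.coev x ▷ _) ≫ (_ ◁ ω.map f) ▷ _ ≫ _ ≫ (_ ◁ cd.ev y) ≫ _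
  monoidal

lemma ConstructionData.dmap_id (x : D) : cd.dmap (𝟙 x) = 𝟙 (cd.dual x) := by
  letI := cd.hld x
  rw [cd.dmap_eq, CategoryTheory.Functor.map_id, leftAdjointMate_id]
  rfl

lemma ConstructionData.dmap_comp {x y z : D} (f : x ⟶ y) (g : y ⟶ z) :
    cd.dmap (f ≫ g) = cd.dmap g ≫ cd.dmap f := by
  letI := cd.hld x; letI := cd.hld y; letI := cd.hld z
  rw [cd.dmap_eq, cd.dmap_eq, cd.dmap_eq, ω.map_comp, comp_leftAdjointMate]
  rfl

lemma ConstructionData.coev_dmap {x y : D} (f : x ⟶ y) :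
    cd.coev y ≫ (cd.dmap f ▷ ω.obj y) = cd.coev x ≫ (cd.dual x ◁ ω.map f) := by
  letI := cd.hld x; letI := cd.hld y
  rw [cd.dmap_eq]
  exact coevaluation_comp_leftAdjointMate (ω.map f)

lemma ConstructionData.dmap_ev {x y : D} (f : x ⟶ y) :
    (ω.obj x ◁ cd.dmap f) ≫ cd.ev x = (ω.map f ▷ cd.dual y) ≫ cd.ev y := by
  letI := cd.hld x; letI := cd.hld y
  rw [cd.dmap_eq]
  exact leftAdjointMate_comp_evaluation (ω.map f)

namespace ConstructionData

def requiv (x : D) (A Z : V) : (A ⊗ cd.dual x ⟶ Z) ≃ (A ⟶ Z ⊗ ω.obj x) :=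
  letI := cd.pairing x
  tensorRightHomEquiv A (cd.dual x) (ω.obj x) Z

def lequiv (x : D) (A Z : V) : (ω.obj x ⊗ A ⟶ Z) ≃ (A ⟶ cd.dual x ⊗ Z) :=
  letI := cd.pairing x
  tensorLeftHomEquiv A (cd.dual x) (ω.obj x) Z

lemma requiv_apply (x : D) {A Z : V} (f : A ⊗ cd.dual x ⟶ Z) :
    cd.requiv x A Z f =
      (ρ_ A).inv ≫ (A ◁ cd.coev x) ≫ (α_ A (cd.dual x) (ω.obj x)).inv ≫ (f ▷ ω.obj x) :=
  rfl

lemma requiv_symm_apply (x : D) {A Z : V} (g : A ⟶ Z ⊗ ω.obj x) :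
    (cd.requiv x A Z).symm g =
      (g ▷ cd.dual x) ≫ (α_ Z (ω.obj x) (cd.dual x)).hom ≫ (Z ◁ cd.ev x) ≫ (ρ_ Z).hom :=
  rfl

lemma lequiv_apply (x : D) {A Z : V} (f : ω.obj x ⊗ A ⟶ Z) :
    cd.lequiv x A Z f =
      (λ_ A).inv ≫ (cd.coev x ▷ A) ≫ (α_ (cd.dual x) (ω.obj x) A).hom ≫ (cd.dual x ◁ f) :=
  rfl

lemma lequiv_symm_apply (x : D) {A Z : V} (g : A ⟶ cd.dual x ⊗ Z) :
    (cd.lequiv x A Z).symm g =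
      (ω.obj x ◁ g) ≫ (α_ (ω.obj x) (cd.dual x) Z).inv ≫ (cd.ev x ▷ Z) ≫ (λ_ Z).hom :=
  rfl

/- target naturality -/
lemma requiv_comp (x : D) {A Z Z' : V} (f : A ⊗ cd.dual x ⟶ Z) (g : Z ⟶ Z') :
    cd.requiv x A Z' (f ≫ g) = cd.requiv x A Z f ≫ (g ▷ ω.obj x) := by
  simp [requiv_apply]

lemma lequiv_comp (x : D) {A Z Z' : V} (f : ω.obj x ⊗ A ⟶ Z) (g : Z ⟶ Z') :
    cd.lequiv x A Z' (f ≫ g) = cd.lequiv x A Z f ≫ (cd.dual x ◁ g) := by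
  simp [lequiv_apply]

/- source naturality -/
lemma requiv_whiskerRight_comp (x : D) {A' A Z : V} (w : A' ⟶ A) (f : A ⊗ cd.dual x ⟶ Z) :
    cd.requiv x A' Z ((w ▷ cd.dual x) ≫ f) = w ≫ cd.requiv x A Z f := by
  simp only [requiv_apply, comp_whiskerRight, Category.assoc]
  rw [← associator_inv_naturality_left_assoc, whisker_exchange_assoc]
  simp

lemma lequiv_whiskerLeft_comp (x : D) {A' A Z : V} (w : A' ⟶ A) (f : ω.obj x ⊗ A ⟶ Z) :
    cd.lequiv x A' Z ((ω.obj x ◁ w) ≫ f) = w ≫ cd.lequiv x A Z f := by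
  simp only [lequiv_apply, MonoidalCategory.whiskerLeft_comp]
  rw [← associator_naturality_right_assoc, ← whisker_exchange_assoc]
  simp

/- dinaturality -/
lemma requiv_dinat {x y : D} (h : x ⟶ y) {A Z : V} (u : A ⊗ cd.dual x ⟶ Z) :
    cd.requiv y A Z ((A ◁ cd.dmap h) ≫ u) = cd.requiv x A Z u ≫ (Z ◁ ω.map h) := by
  simp only [requiv_apply, comp_whiskerRight, Category.assoc]
  rw [← associator_inv_naturality_middle_assoc, ← MonoidalCategory.whiskerLeft_comp_assoc,
    cd.coev_dmap, MonoidalCategory.whiskerLeft_comp_assoc,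
    associator_inv_naturality_right_assoc, whisker_exchange]

lemma lequiv_dinat {x y : D} (h : x ⟶ y) {A Z : V} (v : ω.obj y ⊗ A ⟶ Z) :
    cd.lequiv x A Z ((ω.map h ▷ A) ≫ v) = cd.lequiv y A Z v ≫ (cd.dmap h ▷ Z) := by
  simp only [lequiv_apply, MonoidalCategory.whiskerLeft_comp]
  rw [← associator_naturality_middle_assoc, ← comp_whiskerRight_assoc,
    ← cd.coev_dmap, comp_whiskerRight_assoc,
    associator_naturality_left_assoc, ← whisker_exchange]
  simp only [Category.assoc]

end ConstructionData

namespace ConstructionData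

def tau (x : D) (M N : V) : ((ω.obj x ⊗ M) ⊗ cd.dual x ⟶ N) ≃ (M ⟶ (cd.dual x ⊗ N) ⊗ ω.obj x) :=
  ((cd.requiv x (ω.obj x ⊗ M) N).trans (cd.lequiv x M (N ⊗ ω.obj x))).trans
    ((Iso.refl M).homCongr (α_ (cd.dual x) N (ω.obj x)).symm)

lemma tau_apply (x : D) {M N : V} (u : (ω.obj x ⊗ M) ⊗ cd.dual x ⟶ N) :
    cd.tau x M N u =
      cd.lequiv x M (N ⊗ ω.obj x) (cd.requiv x (ω.obj x ⊗ M) N u) ≫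
        (α_ (cd.dual x) N (ω.obj x)).inv := by
  simp [tau, Iso.homCongr]

/-- naturality of `tau` in the `M` variable -/
lemma tau_whisker_comp (x : D) {M' M N : V} (f : M' ⟶ M)
    (u : (ω.obj x ⊗ M) ⊗ cd.dual x ⟶ N) :
    cd.tau x M' N (((ω.obj x ◁ f) ▷ cd.dual x) ≫ u) = f ≫ cd.tau x M N u := by
  rw [tau_apply, tau_apply, cd.requiv_whiskerRight_comp, cd.lequiv_whiskerLeft_comp,
    Category.assoc]

/-- naturality of `tau` in the `N` variable -/
lemma tau_comp (x : D) {M N N' : V} (u : (ω.obj x ⊗ M) ⊗ cd.dual x ⟶ N) (n : N ⟶ N') :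
    cd.tau x M N' (u ≫ n) = cd.tau x M N u ≫ ((cd.dual x ◁ n) ▷ ω.obj x) := by
  rw [tau_apply, tau_apply, cd.requiv_comp, cd.lequiv_comp, Category.assoc,
    associator_inv_naturality_middle]
  simp only [Category.assoc]

/-- the key dinaturality equivalence for `tau` -/
lemma tau_wedge_iff {x y : D} (h : x ⟶ y) {M N : V}
    (u : (ω.obj x ⊗ M) ⊗ cd.dual x ⟶ N) (v : (ω.obj y ⊗ M) ⊗ cd.dual y ⟶ N) :
    (((ω.map h ▷ M) ▷ cd.dual y) ≫ v = ((ω.obj x ⊗ M) ◁ cd.dmap h) ≫ u) ↔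
      (cd.tau x M N u ≫ ((cd.dual x ⊗ N) ◁ ω.map h) =
        cd.tau y M N v ≫ ((cd.dmap h ▷ N) ▷ ω.obj y)) := by
  have key1 : (((ω.map h ▷ M) ▷ cd.dual y) ≫ v = ((ω.obj x ⊗ M) ◁ cd.dmap h) ≫ u) ↔
      ((ω.map h ▷ M) ≫ cd.requiv y (ω.obj y ⊗ M) N v =
        cd.requiv x (ω.obj x ⊗ M) N u ≫ (N ◁ ω.map h)) := by
    rw [← cd.requiv_whiskerRight_comp y (ω.map h ▷ M) v, ← cd.requiv_dinat h u]
    exact (Equiv.apply_eq_iff_eq _).symm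
  have key2 : (cd.tau x M N u ≫ ((cd.dual x ⊗ N) ◁ ω.map h) =
        cd.tau y M N v ≫ ((cd.dmap h ▷ N) ▷ ω.obj y)) ↔
      ((ω.map h ▷ M) ≫ cd.requiv y (ω.obj y ⊗ M) N v =
        cd.requiv x (ω.obj x ⊗ M) N u ≫ (N ◁ ω.map h)) := by
    rw [tau_apply, tau_apply, Category.assoc, Category.assoc,
      ← associator_inv_naturality_right, ← associator_inv_naturality_left,
      ← Category.assoc, ← Category.assoc, cancel_mono,
      ← cd.lequiv_comp, ← cd.lequiv_dinat h, Equiv.apply_eq_iff_eq]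
    exact eq_comm
  exact key1.trans key2.symm

end ConstructionData

namespace ConstructionData

lemma hom_ext_T {M N : V} {f₁ f₂ : cd.T.obj M ⟶ N}
    (w : ∀ x : D, cd.i x M ≫ f₁ = cd.i x M ≫ f₂) : f₁ = f₂ := by
  obtain ⟨g, hg, hu⟩ := cd.universal M N (fun x => cd.i x M ≫ f₁)
    (fun {x y} h => by rw [← Category.assoc, ← Category.assoc, cd.dinat])
  rw [hu f₁ fun x => rfl, hu f₂ fun x => (w x).symm]

/-- An "end object at `N`": the object `∫_x (ω x)^∨ ⊗ N ⊗ ω x` with its universal wedge. -/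
structure EndAt (N : V) where
  E : V
  j : ∀ x : D, E ⟶ (cd.dual x ⊗ N) ⊗ ω.obj x
  wedge : ∀ {x y : D} (f : x ⟶ y),
    j x ≫ ((cd.dual x ⊗ N) ◁ ω.map f) = j y ≫ ((cd.dmap f ▷ N) ▷ ω.obj y)
  universal : ∀ (P : V) (f : ∀ x : D, P ⟶ (cd.dual x ⊗ N) ⊗ ω.obj x),
    (∀ {x y : D} (h : x ⟶ y),
      f x ≫ ((cd.dual x ⊗ N) ◁ ω.map h) = f y ≫ ((cd.dmap h ▷ N) ▷ ω.obj y)) →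
    ∃! g : P ⟶ E, ∀ x : D, g ≫ j x = f x

lemma EndAt.hom_ext {N : V} (ea : cd.EndAt N) {P : V} {g₁ g₂ : P ⟶ ea.E}
    (w : ∀ x : D, g₁ ≫ ea.j x = g₂ ≫ ea.j x) : g₁ = g₂ := by
  obtain ⟨g, hg, hu⟩ := ea.universal P (fun x => g₁ ≫ ea.j x)
    (fun {x y} h => by rw [Category.assoc, Category.assoc, ea.wedge])
  rw [hu g₁ fun x => rfl, hu g₂ fun x => (w x).symm]

noncomputable def toEnd {N : V} (ea : cd.EndAt N) {M : V} (g : cd.T.obj M ⟶ N) : M ⟶ ea.E :=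
  (ea.universal M (fun x => cd.tau x M N (cd.i x M ≫ g)) (fun {x y} h =>
    (cd.tau_wedge_iff h _ _).mp
      (by rw [← Category.assoc, ← Category.assoc, cd.dinat]))).exists.choose

lemma toEnd_j {N : V} (ea : cd.EndAt N) {M : V} (g : cd.T.obj M ⟶ N) (x : D) :
    toEnd cd ea g ≫ ea.j x = cd.tau x M N (cd.i x M ≫ g) :=
  (ea.universal M (fun x => cd.tau x M N (cd.i x M ≫ g)) (fun {x y} h =>
    (cd.tau_wedge_iff h _ _).mp
      (by rw [← Category.assoc, ← Category.assoc, cd.dinat]))).exists.choose_spec x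

noncomputable def ofEnd {N : V} (ea : cd.EndAt N) {M : V} (k : M ⟶ ea.E) : cd.T.obj M ⟶ N :=
  (cd.universal M N (fun x => (cd.tau x M N).symm (k ≫ ea.j x)) (fun {x y} h =>
    (cd.tau_wedge_iff h _ _).mpr
      (by rw [Equiv.apply_symm_apply, Equiv.apply_symm_apply, Category.assoc, Category.assoc,
        ea.wedge]))).exists.choose

lemma i_ofEnd {N : V} (ea : cd.EndAt N) {M : V} (k : M ⟶ ea.E) (x : D) :
    cd.i x M ≫ ofEnd cd ea k = (cd.tau x M N).symm (k ≫ ea.j x) :=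
  (cd.universal M N (fun x => (cd.tau x M N).symm (k ≫ ea.j x)) (fun {x y} h =>
    (cd.tau_wedge_iff h _ _).mpr
      (by rw [Equiv.apply_symm_apply, Equiv.apply_symm_apply, Category.assoc, Category.assoc,
        ea.wedge]))).exists.choose_spec x

noncomputable def homEquivAt {N : V} (ea : cd.EndAt N) (M : V) :
    (cd.T.obj M ⟶ N) ≃ (M ⟶ ea.E) where
  toFun := toEnd cd ea
  invFun := ofEnd cd ea
  left_inv g := cd.hom_ext_T (fun x => by
    rw [i_ofEnd, toEnd_j, Equiv.symm_apply_apply])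
  right_inv k := EndAt.hom_ext cd ea (fun x => by
    rw [toEnd_j, i_ofEnd, Equiv.apply_symm_apply])

lemma toEnd_natural {N : V} (ea : cd.EndAt N) {M' M : V} (f : M' ⟶ M) (g : cd.T.obj M ⟶ N) :
    toEnd cd ea (cd.T.map f ≫ g) = f ≫ toEnd cd ea g := by
  refine EndAt.hom_ext cd ea (fun x => ?_)
  rw [toEnd_j, Category.assoc, toEnd_j, ← cd.tau_whisker_comp, ← Category.assoc, ← cd.nat,
    Category.assoc]

end ConstructionData

/-- Repackage an `EndData` as a family of `EndAt`s. -/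
abbrev EndData.endAt (ed : EndData cd) (N : V) : cd.EndAt N where
  E := ed.G.obj N
  j x := ed.j x N
  wedge := fun {x y} h => ed.dinat h N
  universal := fun P f hf => ed.universal N P f hf

/-- The adjunction `T ⊣ G` for any choice of ends `G`. -/
noncomputable def adjOfEndData (ed : EndData cd) : cd.T ⊣ ed.G :=
  CategoryTheory.Adjunction.mkOfHomEquiv
    { homEquiv := fun M N => ConstructionData.homEquivAt cd (ed.endAt cd N) M
      homEquiv_naturality_left_symm := fun {M' M N} f g => by
        rw [Equiv.symm_apply_eq]
        show f ≫ g = ConstructionData.toEnd cd (ed.endAt cd N) (cd.T.map f ≫ _)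
        rw [ConstructionData.toEnd_natural]
        congr 1
        exact (Equiv.apply_symm_apply (ConstructionData.homEquivAt cd (ed.endAt cd N) M) g).symm
      homEquiv_naturality_right := fun {M N N'} g n => by
        refine ConstructionData.EndAt.hom_ext cd (ed.endAt cd N') (fun x => ?_)
        have hn : ed.G.map n ≫ (ed.endAt cd N').j x =
            (ed.endAt cd N).j x ≫ ((cd.dual x ◁ n) ▷ ω.obj x) := ed.nat x n
        show ConstructionData.toEnd cd (ed.endAt cd N') (g ≫ n) ≫ (ed.endAt cd N').j x =
          (ConstructionData.toEnd cd (ed.endAt cd N) g ≫ ed.G.map n) ≫ (ed.endAt cd N').j x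
        rw [ConstructionData.toEnd_j, Category.assoc, hn]
        conv_rhs => rw [← Category.assoc, ConstructionData.toEnd_j, ← cd.tau_comp]
        simp only [Category.assoc]
    }

namespace ConstructionData

lemma isIso_dmap {x y : D} (φ : x ⟶ y) [IsIso φ] : IsIso (cd.dmap φ) :=
  ⟨cd.dmap (inv φ), by rw [← cd.dmap_comp, IsIso.inv_hom_id, cd.dmap_id],
    by rw [← cd.dmap_comp, IsIso.hom_inv_id, cd.dmap_id]⟩

section Complete

open CategoryTheory.Limits

variable [EssentiallySmall.{v₂} D] (N : V)

/-- The multiequalizer index computing the end `∫_x (ω x)^∨ ⊗ N ⊗ ω x`. -/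
noncomputable abbrev idx : MulticospanIndex
    { L := SmallModel D, R := Σ a b : SmallModel D, a ⟶ b, fst := fun r => r.1,
      snd := fun r => r.2.1 } V where
  left a := (cd.dual ((equivSmallModel.{v₂} D).inverse.obj a) ⊗ N) ⊗
    ω.obj ((equivSmallModel.{v₂} D).inverse.obj a)
  right r := (cd.dual ((equivSmallModel.{v₂} D).inverse.obj r.1) ⊗ N) ⊗
    ω.obj ((equivSmallModel.{v₂} D).inverse.obj r.2.1)
  fst r := (cd.dual ((equivSmallModel.{v₂} D).inverse.obj r.1) ⊗ N) ◁
    ω.map ((equivSmallModel.{v₂} D).inverse.map r.2.2)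
  snd r := (cd.dmap ((equivSmallModel.{v₂} D).inverse.map r.2.2) ▷ N) ▷
    ω.obj ((equivSmallModel.{v₂} D).inverse.obj r.2.1)

/-- Comparison from the component at the small model to the component at `x`. -/
noncomputable def jmap (x : D) :
    (cd.idx N).left ((equivSmallModel.{v₂} D).functor.obj x) ⟶ (cd.dual x ⊗ N) ⊗ ω.obj x :=
  ((cd.dmap ((equivSmallModel.{v₂} D).unit.app x) ▷ N) ▷
      ω.obj ((equivSmallModel.{v₂} D).inverse.obj ((equivSmallModel.{v₂} D).functor.obj x))) ≫
    ((cd.dual x ⊗ N) ◁ ω.map ((equivSmallModel.{v₂} D).unitInv.app x))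

lemma jmap_isIso (x : D) : IsIso (cd.jmap N x) := by
  haveI := cd.isIso_dmap ((equivSmallModel.{v₂} D).unit.app x)
  dsimp only [jmap]
  infer_instance

lemma wedge_jmap {P : V} (f : ∀ x : D, P ⟶ (cd.dual x ⊗ N) ⊗ ω.obj x)
    (hf : ∀ {x y : D} (h : x ⟶ y),
      f x ≫ ((cd.dual x ⊗ N) ◁ ω.map h) = f y ≫ ((cd.dmap h ▷ N) ▷ ω.obj y)) (x : D) :
    f ((equivSmallModel.{v₂} D).inverse.obj ((equivSmallModel.{v₂} D).functor.obj x)) ≫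
      cd.jmap N x = f x := by
  have w := hf ((equivSmallModel.{v₂} D).unit.app x)
  dsimp only [Functor.comp_obj, Functor.id_obj] at w
  dsimp only [jmap]
  rw [← Category.assoc, ← w, Category.assoc, ← MonoidalCategory.whiskerLeft_comp, ← ω.map_comp]
  simp

end Complete

end ConstructionData

namespace ConstructionData

section Complete2

open CategoryTheory.Limits

variable [EssentiallySmall.{v₂} D] [Limits.HasLimits V] (N : V)

/-- The end object at `N`, constructed as a multiequalizer. -/
noncomputable def eaFor : cd.EndAt N where
  E := multiequalizer (cd.idx N)
  j x := Multiequalizer.ι (cd.idx N) ((equivSmallModel.{v₂} D).functor.obj x) ≫ cd.jmap N x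
  wedge := by
    intro x y h
    have κ : Multiequalizer.ι (cd.idx N) ((equivSmallModel.{v₂} D).functor.obj x) ≫
        ((cd.dual ((equivSmallModel.{v₂} D).inverse.obj ((equivSmallModel.{v₂} D).functor.obj x))
            ⊗ N) ◁
          ω.map ((equivSmallModel.{v₂} D).inverse.map ((equivSmallModel.{v₂} D).functor.map h))) =
        Multiequalizer.ι (cd.idx N) ((equivSmallModel.{v₂} D).functor.obj y) ≫
        ((cd.dmap ((equivSmallModel.{v₂} D).inverse.map ((equivSmallModel.{v₂} D).functor.map h))
            ▷ N) ▷
          ω.obj ((equivSmallModel.{v₂} D).inverse.obj ((equivSmallModel.{v₂} D).functor.obj y))) :=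
      Multiequalizer.condition (cd.idx N)
        ⟨(equivSmallModel.{v₂} D).functor.obj x, (equivSmallModel.{v₂} D).functor.obj y,
          (equivSmallModel.{v₂} D).functor.map h⟩
    dsimp only [jmap]
    simp only [Functor.comp_obj, Functor.id_obj] at κ ⊢
    simp only [Category.assoc]
    rw [← MonoidalCategory.whiskerLeft_comp, ← ω.map_comp]
    have h1 : (equivSmallModel.{v₂} D).unitInv.app x ≫ h =
        (equivSmallModel.{v₂} D).inverse.map ((equivSmallModel.{v₂} D).functor.map h) ≫
          (equivSmallModel.{v₂} D).unitInv.app y := by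
      have := (equivSmallModel.{v₂} D).unitInv.naturality h
      simpa using this
    rw [h1, ω.map_comp, MonoidalCategory.whiskerLeft_comp, ← whisker_exchange_assoc,
      reassoc_of% κ, ← comp_whiskerRight_assoc, ← comp_whiskerRight, ← cd.dmap_comp]
    have h2 : (equivSmallModel.{v₂} D).unit.app x ≫
        (equivSmallModel.{v₂} D).inverse.map ((equivSmallModel.{v₂} D).functor.map h) =
          h ≫ (equivSmallModel.{v₂} D).unit.app y := by
      have := (equivSmallModel.{v₂} D).unit.naturality h
      simpa using this
    rw [h2, cd.dmap_comp, comp_whiskerRight, comp_whiskerRight, Category.assoc,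
      ← whisker_exchange]
  universal := by
    intro P f hf
    have hcond : ∀ r : (Σ a b : SmallModel D, a ⟶ b),
        f ((equivSmallModel.{v₂} D).inverse.obj r.1) ≫ (cd.idx N).fst r =
          f ((equivSmallModel.{v₂} D).inverse.obj r.2.1) ≫ (cd.idx N).snd r :=
      fun r => hf ((equivSmallModel.{v₂} D).inverse.map r.2.2)
    set L := Multiequalizer.lift (cd.idx N) P
      (fun a => f ((equivSmallModel.{v₂} D).inverse.obj a)) hcond with hL
    have hLj : ∀ x : D, L ≫ (Multiequalizer.ι (cd.idx N)
        ((equivSmallModel.{v₂} D).functor.obj x) ≫ cd.jmap N x) = f x := by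
      intro x
      rw [← Category.assoc, hL, Multiequalizer.lift_ι]
      exact cd.wedge_jmap N f hf x
    refine ⟨L, hLj, ?_⟩
    intro g hg
    refine Multiequalizer.hom_ext _ _ _ (fun a => ?_)
    -- reduce to the component at `(equivSmallModel D).functor.obj ((equivSmallModel D).inverse.obj a)`
    haveI := cd.isIso_dmap
      ((equivSmallModel.{v₂} D).inverse.map ((equivSmallModel.{v₂} D).counit.app a))
    have κa := Multiequalizer.condition (cd.idx N)
      ⟨(equivSmallModel.{v₂} D).functor.obj ((equivSmallModel.{v₂} D).inverse.obj a), a,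
        (equivSmallModel.{v₂} D).counit.app a⟩
    haveI : IsIso ((cd.idx N).snd ⟨_, a, (equivSmallModel.{v₂} D).counit.app a⟩) := by
      show IsIso ((cd.dmap ((equivSmallModel.{v₂} D).inverse.map
        ((equivSmallModel.{v₂} D).counit.app a)) ▷ N) ▷
          ω.obj ((equivSmallModel.{v₂} D).inverse.obj a))
      infer_instance
    have hκ : Multiequalizer.ι (cd.idx N) a =
        Multiequalizer.ι (cd.idx N)
          ((equivSmallModel.{v₂} D).functor.obj ((equivSmallModel.{v₂} D).inverse.obj a)) ≫
          ((cd.idx N).fst ⟨_, a, (equivSmallModel.{v₂} D).counit.app a⟩ ≫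
            CategoryTheory.inv ((cd.idx N).snd ⟨_, a, (equivSmallModel.{v₂} D).counit.app a⟩)) := by
      rw [← Category.assoc, IsIso.eq_comp_inv]
      exact κa.symm
    have hgL : ∀ x : D, g ≫ Multiequalizer.ι (cd.idx N)
        ((equivSmallModel.{v₂} D).functor.obj x) =
        L ≫ Multiequalizer.ι (cd.idx N) ((equivSmallModel.{v₂} D).functor.obj x) := by
      intro x
      haveI := cd.jmap_isIso N x
      rw [← cancel_mono (cd.jmap N x), Category.assoc, Category.assoc]
      exact (hg x).trans (hLj x).symm
    rw [hκ]
    simp only [← Category.assoc]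
    rw [hgL]

end Complete2

end ConstructionData

end Aux

/-- If `V` is complete, the bimonad `T` associated to a construction
data `(D, ω)` (with `D` essentially small) admits a right adjoint, given by the end
`T^♮ M = ∫_x (ω x)^∨ ⊗ M ⊗ ω x`. -/
theorem T_has_right_adjoint
    [∀ X : V, Limits.PreservesColimits (tensorLeft X)]
    [∀ X : V, Limits.PreservesColimits (tensorRight X)]
    [EssentiallySmall.{v₂} D] [Limits.HasLimits V] :
    cd.T.IsLeftAdjoint ∧ ∀ ed : EndData cd, Nonempty (cd.T ⊣ ed.G) := by
  constructor
  · exact ⟨⟨_, ⟨CategoryTheory.Adjunction.adjunctionOfEquivRight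
      (fun M N => ConstructionData.homEquivAt cd (cd.eaFor N) M)
      (fun M' M N f g => ConstructionData.toEnd_natural cd (cd.eaFor N) f g)⟩⟩⟩
  · intro ed
    exact ⟨adjOfEndData cd ed⟩

end CData
end
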